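/- Let θ₁, θ₂, θ₃ ∈ ℝ be pairwise distinct modulo 2π. Every line in ℝ³ that meets each of the lines L(θ₁), L(θ₂), L(θ₃) is equal to M(φ) for some φ ∈ ℝ. -/

import Mathlib

open Set

noncomputable section

/-- The line in ℝ³ through `a` with direction `v`. -/
def lineThrough (a v : ℝ × ℝ × ℝ) : Set (ℝ × ℝ × ℝ) :=
  {p | ∃ r : ℝ, p = a + r • v}

/-- `L` is a line in ℝ³. -/
def IsLine (L : Set (ℝ × ℝ × ℝ)) : Prop :=
  ∃ a v : ℝ × ℝ × ℝ, v ≠ 0 ∧ L = lineThrough a v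

/-- `L` is a transversal to the family of sets `s`: it is a line meeting every `s i`. -/
def IsTransversal {n : ℕ} (s : Fin n → Set (ℝ × ℝ × ℝ)) (L : Set (ℝ × ℝ × ℝ)) : Prop :=
  IsLine L ∧ ∀ i, (L ∩ s i).Nonempty

/-- Two transversals `L₀`, `L₁` to the family `s` lie in the same connected component of
transversals: one can be moved continuously to the other while remaining a transversal. -/
def SameComp {n : ℕ} (s : Fin n → Set (ℝ × ℝ × ℝ)) (L₀ L₁ : Set (ℝ × ℝ × ℝ)) : Prop :=
  ∃ a v : ℝ → ℝ × ℝ × ℝ,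
    ContinuousOn a (Icc 0 1) ∧ ContinuousOn v (Icc 0 1) ∧
    (∀ t ∈ Icc (0:ℝ) 1, v t ≠ 0) ∧
    (∀ t ∈ Icc (0:ℝ) 1, ∀ i, (lineThrough (a t) (v t) ∩ s i).Nonempty) ∧
    lineThrough (a 0) (v 0) = L₀ ∧ lineThrough (a 1) (v 1) = L₁

/-- The line `L(θ)` of the first ruling of the hyperboloid `x² + y² − z² = 1`. -/
def Lrul (θ : ℝ) : Set (ℝ × ℝ × ℝ) :=
  {p | ∃ t : ℝ, p = (Real.cos θ - t * Real.sin θ, Real.sin θ + t * Real.cos θ, t)}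

/-- The line `M(θ)` of the second ruling of the hyperboloid `x² + y² − z² = 1`. -/
def Mrul (θ : ℝ) : Set (ℝ × ℝ × ℝ) :=
  {p | ∃ t : ℝ, p = (Real.cos θ - t * Real.sin θ, Real.sin θ + t * Real.cos θ, -t)}


section Helpers
open Real

lemma mem_Lrul_iff {θ : ℝ} {p : ℝ × ℝ × ℝ} :
    p ∈ Lrul θ ↔ p.1 = cos θ - p.2.2 * sin θ ∧ p.2.1 = sin θ + p.2.2 * cos θ := by
  constructor
  · rintro ⟨t, rfl⟩; simp
  · rintro ⟨h1, h2⟩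
    exact ⟨p.2.2, by rw [Prod.ext_iff, Prod.ext_iff]; exact ⟨h1, h2, rfl⟩⟩

lemma Lrul_quad {θ : ℝ} {p : ℝ × ℝ × ℝ} (h : p ∈ Lrul θ) :
    p.1^2 + p.2.1^2 - p.2.2^2 = 1 := by
  obtain ⟨t, rfl⟩ := h
  simp only
  linear_combination (1 + t^2) * Real.sin_sq_add_cos_sq θ

lemma Lrul_angle_eq {θ θ' : ℝ} {p : ℝ × ℝ × ℝ} (h : p ∈ Lrul θ) (h' : p ∈ Lrul θ') :
    (θ : AddCircle (2*Real.pi)) = θ' := by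
  rw [mem_Lrul_iff] at h h'
  have hc0 : (1 + p.2.2^2) * (cos θ - cos θ') = 0 := by
    linear_combination (-1) * h.1 + h'.1 - p.2.2 * h.2 + p.2.2 * h'.2
  have hpos : (1 + p.2.2^2) ≠ 0 := by positivity
  have hc : cos θ = cos θ' := by
    have := (mul_eq_zero.mp hc0).resolve_left hpos
    linarith
  have hs : sin θ = sin θ' := by
    linear_combination -h.2 + h'.2 - p.2.2 * hc
  have h1 : Real.cos (θ - θ') = 1 := by
    rw [Real.cos_sub, hc, hs]
    linear_combination cos_sq_add_sin_sq θ'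
  obtain ⟨n, hn⟩ := Real.cos_eq_one_iff _ |>.mp h1
  rw [QuotientAddGroup.eq]
  refine AddSubgroup.mem_zmultiples_iff.mpr ⟨-n, ?_⟩
  rw [zsmul_eq_mul]
  push_cast
  linarith

lemma quad_zero {A B C r₁ r₂ r₃ : ℝ}
    (h1 : A*r₁^2 + B*r₁ + C = 0) (h2 : A*r₂^2 + B*r₂ + C = 0) (h3 : A*r₃^2 + B*r₃ + C = 0)
    (d12 : r₁ ≠ r₂) (d13 : r₁ ≠ r₃) (d23 : r₂ ≠ r₃) : A = 0 ∧ B = 0 ∧ C = 0 := by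
  have hne : (r₁ - r₂) * (r₂ - r₃) * (r₁ - r₃) ≠ 0 :=
    mul_ne_zero (mul_ne_zero (sub_ne_zero.mpr d12) (sub_ne_zero.mpr d23)) (sub_ne_zero.mpr d13)
  have hA : A * ((r₁ - r₂) * (r₂ - r₃) * (r₁ - r₃)) = 0 := by
    linear_combination (r₂ - r₃) * h1 - (r₁ - r₃) * h2 + (r₁ - r₂) * h3
  have hA0 : A = 0 := by
    rcases mul_eq_zero.mp hA with h | h
    · exact h
    · exact absurd h hne
  have hB : B * (r₁ - r₂) = 0 := by
    linear_combination h1 - h2 - (r₁^2 - r₂^2) * hA0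
  have hB0 : B = 0 := by
    rcases mul_eq_zero.mp hB with h | h
    · exact h
    · exact absurd h (sub_ne_zero.mpr d12)
  refine ⟨hA0, hB0, ?_⟩
  linear_combination h1 - r₁^2 * hA0 - r₁ * hB0

lemma lineThrough_shift (a v : ℝ × ℝ × ℝ) (s c : ℝ) (hc : c ≠ 0) :
    lineThrough (a + s • v) (c • v) = lineThrough a v := by
  ext p
  constructor
  · rintro ⟨r, rfl⟩
    exact ⟨s + r * c, by module⟩
  · rintro ⟨r, rfl⟩
    refine ⟨(r - s) / c, ?_⟩
    rw [smul_smul, div_mul_cancel₀ _ hc]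
    module

lemma eq_Lrul {b w : ℝ × ℝ × ℝ} (φ : ℝ) (hb1 : b.1 = cos φ) (hb2 : b.2.1 = sin φ)
    (hb3 : b.2.2 = 0) (hw1 : w.1 = -sin φ) (hw2 : w.2.1 = cos φ) (hw3 : w.2.2 = 1) :
    lineThrough b w = Lrul φ := by
  ext p
  constructor
  · rintro ⟨r, rfl⟩
    refine ⟨r, ?_⟩
    rw [Prod.ext_iff, Prod.ext_iff]
    refine ⟨?_, ?_, ?_⟩ <;>
      simp [Prod.fst_add, Prod.snd_add, Prod.smul_fst, Prod.smul_snd, smul_eq_mul,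
        hb1, hb2, hb3, hw1, hw2, hw3] <;> ring
  · rintro ⟨t, rfl⟩
    refine ⟨t, ?_⟩
    rw [Prod.ext_iff, Prod.ext_iff]
    refine ⟨?_, ?_, ?_⟩ <;>
      simp [Prod.fst_add, Prod.snd_add, Prod.smul_fst, Prod.smul_snd, smul_eq_mul,
        hb1, hb2, hb3, hw1, hw2, hw3] <;> ring

lemma eq_Mrul {b w : ℝ × ℝ × ℝ} (φ : ℝ) (hb1 : b.1 = cos φ) (hb2 : b.2.1 = sin φ)
    (hb3 : b.2.2 = 0) (hw1 : w.1 = sin φ) (hw2 : w.2.1 = -cos φ) (hw3 : w.2.2 = 1) :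
    lineThrough b w = Mrul φ := by
  ext p
  constructor
  · rintro ⟨r, rfl⟩
    refine ⟨-r, ?_⟩
    rw [Prod.ext_iff, Prod.ext_iff]
    refine ⟨?_, ?_, ?_⟩ <;>
      simp [Prod.fst_add, Prod.snd_add, Prod.smul_fst, Prod.smul_snd, smul_eq_mul,
        hb1, hb2, hb3, hw1, hw2, hw3] <;> ring
  · rintro ⟨t, rfl⟩
    refine ⟨-t, ?_⟩
    rw [Prod.ext_iff, Prod.ext_iff]
    refine ⟨?_, ?_, ?_⟩ <;>
      simp [Prod.fst_add, Prod.snd_add, Prod.smul_fst, Prod.smul_snd, smul_eq_mul,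
        hb1, hb2, hb3, hw1, hw2, hw3] <;> ring

lemma exists_angle {x y : ℝ} (h : x^2 + y^2 = 1) : ∃ φ : ℝ, cos φ = x ∧ sin φ = y := by
  have hx1 : -1 ≤ x := by nlinarith [sq_nonneg y]
  have hx2 : x ≤ 1 := by nlinarith [sq_nonneg y]
  have hsin : sin (arccos x) = |y| := by
    rw [Real.sin_arccos]
    rw [show 1 - x^2 = y^2 by linarith, sqrt_sq_eq_abs]
  rcases le_or_gt 0 y with hy | hy
  · exact ⟨arccos x, Real.cos_arccos hx1 hx2, by rwa [abs_of_nonneg hy] at hsin⟩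
  · refine ⟨-arccos x, ?_, ?_⟩
    · rw [Real.cos_neg]; exact Real.cos_arccos hx1 hx2
    · rw [Real.sin_neg, hsin, abs_of_neg hy, neg_neg]

lemma classify {a v : ℝ × ℝ × ℝ} (hv : v ≠ 0)
    (hA : v.1^2 + v.2.1^2 - v.2.2^2 = 0)
    (hB : a.1 * v.1 + a.2.1 * v.2.1 - a.2.2 * v.2.2 = 0)
    (hC : a.1^2 + a.2.1^2 - a.2.2^2 = 1) :
    (∃ φ, lineThrough a v = Lrul φ) ∨ (∃ φ, lineThrough a v = Mrul φ) := by
  have hv3 : v.2.2 ≠ 0 := by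
    intro h0
    apply hv
    have h1 : v.1 = 0 := by nlinarith [sq_nonneg v.1, sq_nonneg v.2.1]
    have h2 : v.2.1 = 0 := by nlinarith [sq_nonneg v.1, sq_nonneg v.2.1]
    exact Prod.ext h1 (Prod.ext h2 h0)
  set b : ℝ × ℝ × ℝ := a + (-(a.2.2 / v.2.2)) • v with hbdef
  set w : ℝ × ℝ × ℝ := (1 / v.2.2) • v with hwdef
  have hline : lineThrough b w = lineThrough a v :=
    lineThrough_shift a v _ _ (one_div_ne_zero hv3)
  have hb1 : b.1 = a.1 - (a.2.2 / v.2.2) * v.1 := by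
    simp [hbdef, Prod.fst_add, Prod.smul_fst, smul_eq_mul]; ring
  have hb2 : b.2.1 = a.2.1 - (a.2.2 / v.2.2) * v.2.1 := by
    simp [hbdef, Prod.snd_add, Prod.smul_snd, smul_eq_mul]; ring
  have hb3 : b.2.2 = 0 := by
    simp [hbdef, Prod.snd_add, Prod.smul_snd, smul_eq_mul]
    field_simp
    ring
  have hw1 : w.1 = v.1 / v.2.2 := by
    simp [hwdef, Prod.smul_fst, smul_eq_mul]; ring
  have hw2 : w.2.1 = v.2.1 / v.2.2 := by
    simp [hwdef, Prod.smul_snd, smul_eq_mul]; ring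
  have hw3 : w.2.2 = 1 := by
    simp [hwdef, Prod.smul_snd, smul_eq_mul]
    field_simp
  have hbb : b.1^2 + b.2.1^2 = 1 := by
    rw [hb1, hb2]; field_simp
    linear_combination v.2.2^2 * hC + a.2.2^2 * hA - 2 * a.2.2 * v.2.2 * hB
  have hww : w.1^2 + w.2.1^2 = 1 := by
    rw [hw1, hw2]; field_simp; linarith
  have hperp : b.1 * w.1 + b.2.1 * w.2.1 = 0 := by
    rw [hb1, hb2, hw1, hw2]; field_simp
    linear_combination v.2.2 * hB - a.2.2 * hA
  obtain ⟨φ, hcos, hsin⟩ := exists_angle hbb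
  set μ : ℝ := b.1 * w.2.1 - b.2.1 * w.1 with hμ
  have hwb1 : w.1 = -b.2.1 * μ := by
    rw [hμ]; linear_combination b.1 * hperp - w.1 * hbb
  have hwb2 : w.2.1 = b.1 * μ := by
    rw [hμ]; linear_combination b.2.1 * hperp - w.2.1 * hbb
  have hμ2 : μ * μ = 1 := by
    rw [hwb1, hwb2] at hww
    linear_combination hww - μ^2 * hbb
  rcases mul_self_eq_one_iff.mp hμ2 with h1 | h1
  · left
    refine ⟨φ, ?_⟩
    rw [← hline]
    refine eq_Lrul φ hcos.symm hsin.symm hb3 ?_ ?_ hw3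
    · rw [hwb1, h1, hsin]; ring
    · rw [hwb2, h1, hcos]; ring
  · right
    refine ⟨φ, ?_⟩
    rw [← hline]
    refine eq_Mrul φ hcos.symm hsin.symm hb3 ?_ ?_ hw3
    · rw [hwb1, h1, hsin]; ring
    · rw [hwb2, h1, hcos]; ring

end Helpers

/-- every line meeting `L(θ₁)`, `L(θ₂)`, `L(θ₃)` for `θ₁, θ₂, θ₃` pairwise
distinct modulo `2π` is a line `M(φ)` of the second ruling. -/
theorem stmt_8 (θ₁ θ₂ θ₃ : ℝ)
    (h12 : (θ₁ : AddCircle (2 * Real.pi)) ≠ (θ₂ : AddCircle (2 * Real.pi)))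
    (h13 : (θ₁ : AddCircle (2 * Real.pi)) ≠ (θ₃ : AddCircle (2 * Real.pi)))
    (h23 : (θ₂ : AddCircle (2 * Real.pi)) ≠ (θ₃ : AddCircle (2 * Real.pi)))
    (L : Set (ℝ × ℝ × ℝ)) (hL : IsLine L)
    (m1 : (L ∩ Lrul θ₁).Nonempty) (m2 : (L ∩ Lrul θ₂).Nonempty)
    (m3 : (L ∩ Lrul θ₃).Nonempty) :
    ∃ φ : ℝ, L = Mrul φ := by
  obtain ⟨a, v, hv, rfl⟩ := hL
  obtain ⟨p₁, hp₁L, hp₁⟩ := m1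
  obtain ⟨p₂, hp₂L, hp₂⟩ := m2
  obtain ⟨p₃, hp₃L, hp₃⟩ := m3
  obtain ⟨r₁, hr₁⟩ := hp₁L
  obtain ⟨r₂, hr₂⟩ := hp₂L
  obtain ⟨r₃, hr₃⟩ := hp₃L
  have d12 : r₁ ≠ r₂ := by
    rintro rfl
    have hpp : p₁ = p₂ := hr₁.trans hr₂.symm
    rw [hpp] at hp₁
    exact h12 (Lrul_angle_eq hp₁ hp₂)
  have d13 : r₁ ≠ r₃ := by
    rintro rfl
    have hpp : p₁ = p₃ := hr₁.trans hr₃.symm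
    rw [hpp] at hp₁
    exact h13 (Lrul_angle_eq hp₁ hp₃)
  have d23 : r₂ ≠ r₃ := by
    rintro rfl
    have hpp : p₂ = p₃ := hr₂.trans hr₃.symm
    rw [hpp] at hp₂
    exact h23 (Lrul_angle_eq hp₂ hp₃)
  have hq1 := Lrul_quad hp₁
  have hq2 := Lrul_quad hp₂
  have hq3 := Lrul_quad hp₃
  rw [hr₁] at hq1
  rw [hr₂] at hq2
  rw [hr₃] at hq3
  simp only [Prod.fst_add, Prod.snd_add, Prod.smul_fst, Prod.smul_snd, smul_eq_mul] at hq1 hq2 hq3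
  obtain ⟨hA, hB, hC⟩ := quad_zero (A := v.1^2 + v.2.1^2 - v.2.2^2)
    (B := 2 * (a.1 * v.1 + a.2.1 * v.2.1 - a.2.2 * v.2.2))
    (C := a.1^2 + a.2.1^2 - a.2.2^2 - 1)
    (by linear_combination hq1) (by linear_combination hq2) (by linear_combination hq3)
    d12 d13 d23
  rcases classify (a := a) (v := v) hv hA (by linarith) (by linarith) with ⟨φ, hφ⟩ | ⟨φ, hφ⟩
  · exfalso
    have hm1 : p₁ ∈ Lrul φ := by rw [← hφ]; exact ⟨r₁, hr₁⟩
    have hm2 : p₂ ∈ Lrul φ := by rw [← hφ]; exact ⟨r₂, hr₂⟩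
    exact h12 ((Lrul_angle_eq hp₁ hm1).trans (Lrul_angle_eq hm2 hp₂))
  · exact ⟨φ, hφ⟩
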